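/- Let θ ∈ [0, 1/2) and for each n ≥ 1 let ψ₀ⁿ, ψ₁ⁿ : ℝ² → ℝ² be Lipschitz maps such that there exists N with: for every n ≥ N, both ψ₀ⁿ and ψ₁ⁿ are Lipschitz with constant θ. Let B ⊆ ℝ² be a nonempty compact set with ψ₀ⁿ(B) ⊆ B and ψ₁ⁿ(B) ⊆ B for all n. Then there exist L ≥ 0 and a curve γ : [0,1] → ℝ² that is Lipschitz with constant L such that the set A = ⋂_{n≥1} ⋃_{w ∈ {0,1}ⁿ} Bⁿ_w is contained in the image γ([0,1]). -/

import Mathlib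

set_option maxHeartbeats 1000000

noncomputable section

/-- The plane with the Euclidean norm. -/
abbrev E2 : Type := EuclideanSpace ℝ (Fin 2)

/-- For a word `w = (w₁, …, wₙ) ∈ {0,1}ⁿ` and a family of maps `ψᵏᵢ` depending on the
level `k`, the composition `ψⁿ_w = ψ¹_{w₁} ∘ ψ²_{w₂} ∘ ⋯ ∘ ψⁿ_{wₙ}`, where the first
map used is taken at level `k`. -/
def wordCompNA (ψ : ℕ → Bool → E2 → E2) : (k : ℕ) → (n : ℕ) → (Fin n → Bool) → E2 → E2
  | _, 0, _ => id
  | k, n + 1, w => ψ k (w 0) ∘ wordCompNA ψ (k + 1) n (fun i => w i.succ)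

lemma wordCompNA_zero (ψ : ℕ → Bool → E2 → E2) (k : ℕ) (w : Fin 0 → Bool) :
    wordCompNA ψ k 0 w = id := rfl

lemma wordCompNA_succ (ψ : ℕ → Bool → E2 → E2) (k n : ℕ) (w : Fin (n+1) → Bool) :
    wordCompNA ψ k (n+1) w = ψ k (w 0) ∘ wordCompNA ψ (k+1) n (fun i => w i.succ) := rfl

lemma wordCompNA_succ_right (ψ : ℕ → Bool → E2 → E2) :
    ∀ (n k : ℕ) (w : Fin (n+1) → Bool),
    wordCompNA ψ k (n+1) w
      = wordCompNA ψ k n (fun i => w i.castSucc) ∘ ψ (k+n) (w (Fin.last n)) := by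
  intro n
  induction n with
  | zero =>
    intro k w
    funext p
    simp [wordCompNA_succ, wordCompNA_zero]
  | succ n ih =>
    intro k w
    rw [wordCompNA_succ, ih (k+1) (fun i => w i.succ)]
    rw [wordCompNA_succ ψ k n (fun i => w i.castSucc)]
    funext p
    simp only [Function.comp_apply, Fin.succ_castSucc, Fin.succ_last, Fin.castSucc_zero,
      Nat.add_assoc, Nat.add_comm 1]

lemma wordCompNA_mem (ψ : ℕ → Bool → E2 → E2) (B : Set E2)
    (hinv : ∀ n : ℕ, ∀ b : Bool, ψ n b '' B ⊆ B) :
    ∀ (n k : ℕ) (w : Fin n → Bool) (p : E2), p ∈ B → wordCompNA ψ k n w p ∈ B := by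
  intro n
  induction n with
  | zero => intro k w p hp; exact hp
  | succ n ih =>
    intro k w p hp
    exact hinv k (w 0) ⟨_, ih (k+1) (fun i => w i.succ) p hp, rfl⟩

lemma wordCompNA_lip (ψ : ℕ → Bool → E2 → E2) (c : ℕ → ℝ) (hc0 : ∀ j, 0 ≤ c j)
    (hc : ∀ j b (p q : E2), ‖ψ j b p - ψ j b q‖ ≤ c j * ‖p - q‖) :
    ∀ (n k : ℕ) (w : Fin n → Bool) (p q : E2),
      ‖wordCompNA ψ k n w p - wordCompNA ψ k n w q‖
        ≤ (∏ i ∈ Finset.range n, c (k+i)) * ‖p - q‖ := by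
  intro n
  induction n with
  | zero => intro k w p q; simp [wordCompNA_zero]
  | succ n ih =>
    intro k w p q
    rw [wordCompNA_succ]
    simp only [Function.comp_apply]
    calc ‖ψ k (w 0) (wordCompNA ψ (k+1) n (fun i => w i.succ) p)
            - ψ k (w 0) (wordCompNA ψ (k+1) n (fun i => w i.succ) q)‖
        ≤ c k * ‖wordCompNA ψ (k+1) n (fun i => w i.succ) p
            - wordCompNA ψ (k+1) n (fun i => w i.succ) q‖ := hc _ _ _ _
      _ ≤ c k * ((∏ i ∈ Finset.range n, c (k+1+i)) * ‖p - q‖) := by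
          apply mul_le_mul_of_nonneg_left (ih _ _ _ _) (hc0 k)
      _ = (∏ i ∈ Finset.range (n+1), c (k+i)) * ‖p - q‖ := by
          rw [Finset.prod_range_succ' (fun i => c (k+i)) n]
          have he : ∀ i, k+1+i = k+(i+1) := fun i => by omega
          simp only [he, Nat.add_zero]
          ring

lemma one_le_prod_real (s : Finset ℕ) (g : ℕ → ℝ) (h : ∀ i ∈ s, 1 ≤ g i) :
    1 ≤ ∏ i ∈ s, g i := by
  induction s using Finset.cons_induction with
  | empty => simp
  | cons a s ha ih =>
    rw [Finset.prod_cons]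
    have h1 := h a (Finset.mem_cons_self a s)
    have h2 := ih (fun i hi => h i (Finset.mem_cons.2 (Or.inr hi)))
    nlinarith

/-- If `ψ₀ⁿ, ψ₁ⁿ : ℝ² → ℝ²` (for `n ≥ 1`) are Lipschitz maps, all of which are Lipschitz
with constant `θ < 1/2` from some level `N` on, and all of which map a nonempty compact
set `B` into itself, then the set `⋂_{n≥1} ⋃_{w ∈ {0,1}ⁿ} Bⁿ_w`, where
`Bⁿ_w = ψ¹_{w₁} ∘ ⋯ ∘ ψⁿ_{wₙ}(B)`, is contained in the image of a Lipschitz curve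
`γ : [0,1] → ℝ²`. -/
theorem lipschitz_curve_through_attractor_nonautonomous
    (θ : ℝ) (hθ : θ ∈ Set.Ico (0 : ℝ) (1 / 2))
    (ψ : ℕ → Bool → E2 → E2)
    (hLipAll : ∀ n : ℕ, ∀ b : Bool, ∃ K : ℝ, 0 ≤ K ∧
      ∀ p q : E2, ‖ψ n b p - ψ n b q‖ ≤ K * ‖p - q‖)
    (hLipθ : ∃ N : ℕ, ∀ n ≥ N, ∀ b : Bool,
      ∀ p q : E2, ‖ψ n b p - ψ n b q‖ ≤ θ * ‖p - q‖)
    (B : Set E2) (hBne : B.Nonempty) (hBcpt : IsCompact B)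
    (hinv : ∀ n : ℕ, ∀ b : Bool, ψ n b '' B ⊆ B) :
    ∃ (L : ℝ) (γ : ℝ → E2), 0 ≤ L ∧
      (∀ s ∈ Set.Icc (0 : ℝ) 1, ∀ t ∈ Set.Icc (0 : ℝ) 1, ‖γ s - γ t‖ ≤ L * |s - t|) ∧
      (⋂ (n : ℕ) (_ : 1 ≤ n), ⋃ w : Fin n → Bool, wordCompNA ψ 1 n w '' B) ⊆
        γ '' Set.Icc 0 1 := by
  classical
  obtain ⟨hθ0, hθhalf⟩ := hθ
  obtain ⟨N, hN⟩ := hLipθ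
  choose K hK0 hK using hLipAll
  -- a per-level Lipschitz constant
  set c : ℕ → ℝ := fun j => if N ≤ j then θ else max (K j false) (K j true) with hcdef
  have hc0 : ∀ j, 0 ≤ c j := by
    intro j
    by_cases h : N ≤ j
    · simp only [hcdef, if_pos h]; exact hθ0
    · simp only [hcdef, if_neg h]; exact le_trans (hK0 j false) (le_max_left _ _)
  clear_value c
  have hc : ∀ j b (p q : E2), ‖ψ j b p - ψ j b q‖ ≤ c j * ‖p - q‖ := by
    intro j b p q
    by_cases h : N ≤ j
    · simp only [hcdef, if_pos h]; exact hN j h b p q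
    · simp only [hcdef, if_neg h]
      refine le_trans (hK j b p q) (mul_le_mul_of_nonneg_right ?_ (norm_nonneg _))
      cases b
      · exact le_max_left _ _
      · exact le_max_right _ _
  -- the ratio r
  obtain ⟨r, hr0, hrhalf, hθr⟩ : ∃ r : ℝ, 0 < r ∧ r < 1/2 ∧ θ ≤ r :=
    ⟨θ/2 + 1/4, by linarith, by linarith, by linarith⟩
  have hr1 : r < 1 := by linarith
  have h1r : 0 < 1 - r := by linarith
  have h12r : 0 < 1 - 2*r := by linarith
  -- the diameter-decay constant
  set Pc : ℝ := ∏ i ∈ Finset.range N, max (c (1+i)) 1 with hPcdef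
  have hPc1 : (1:ℝ) ≤ Pc := by
    rw [hPcdef]
    exact one_le_prod_real _ _ (fun i _ => le_max_right _ _)
  clear_value Pc
  set C : ℝ := Pc / r^N with hCdef
  have hC0 : 0 < C := by
    rw [hCdef]; exact div_pos (lt_of_lt_of_le one_pos hPc1) (pow_pos hr0 N)
  clear_value C
  set D : ℕ → ℝ := fun n => ∏ i ∈ Finset.range n, c (1+i) with hDdef
  clear_value D
  have hD : ∀ n, D n ≤ C * r^n := by
    intro n
    rw [hDdef]
    rcases le_or_gt n N with h | h
    · have h1 : (∏ i ∈ Finset.range n, c (1+i)) ≤ Pc := by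
        calc (∏ i ∈ Finset.range n, c (1+i)) ≤ ∏ i ∈ Finset.range n, max (c (1+i)) 1 :=
              Finset.prod_le_prod (fun i _ => hc0 _) (fun i _ => le_max_left _ _)
          _ ≤ Pc := by
              rw [hPcdef, ← Finset.prod_sdiff (Finset.range_subset_range.2 h)]
              refine le_mul_of_one_le_left
                (Finset.prod_nonneg (fun i _ => le_trans (hc0 _) (le_max_left _ _))) ?_
              exact one_le_prod_real _ _ (fun i _ => le_max_right _ _)
      have h2 : (1:ℝ) ≤ r^n / r^N :=
        (one_le_div (pow_pos hr0 N)).2 (pow_le_pow_of_le_one hr0.le hr1.le h)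
      calc (∏ i ∈ Finset.range n, c (1+i)) ≤ Pc := h1
        _ ≤ Pc * (r^n / r^N) := le_mul_of_one_le_right (le_trans one_pos.le hPc1) h2
        _ = C * r^n := by rw [hCdef]; ring
    · obtain ⟨m, rfl⟩ : ∃ m, n = N + m := ⟨n - N, by omega⟩
      have h1 : (∏ i ∈ Finset.range (N+m), c (1+i)) = (∏ i ∈ Finset.range N, c (1+i)) *
          (∏ i ∈ Finset.range m, c (1+(N+i))) :=
        Finset.prod_range_add (fun i => c (1+i)) N m
      have h2 : (∏ i ∈ Finset.range N, c (1+i)) ≤ Pc := by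
        rw [hPcdef]
        exact Finset.prod_le_prod (fun i _ => hc0 _) (fun i _ => le_max_left _ _)
      have h3 : (∏ i ∈ Finset.range m, c (1+(N+i))) ≤ r^m := by
        calc (∏ i ∈ Finset.range m, c (1+(N+i))) ≤ ∏ _i ∈ Finset.range m, r := by
              refine Finset.prod_le_prod (fun i _ => hc0 _) (fun i _ => ?_)
              have : N ≤ 1+(N+i) := by omega
              simp only [hcdef, if_pos this]
              exact hθr
          _ = r^m := by rw [Finset.prod_const, Finset.card_range]
      calc (∏ i ∈ Finset.range (N+m), c (1+i)) ≤ Pc * r^m := by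
            rw [h1]
            exact mul_le_mul h2 h3 (Finset.prod_nonneg (fun i _ => hc0 _))
              (le_trans one_pos.le hPc1)
        _ = C * r^(N+m) := by
            rw [hCdef, pow_add]
            field_simp
      
  -- base point and diameter bound
  obtain ⟨R, hR⟩ := Metric.isBounded_iff.1 hBcpt.isBounded
  set b0 : E2 := hBne.choose with hb0def
  have hb0 : b0 ∈ B := hBne.choose_spec
  have hR0 : (0:ℝ) ≤ R := by simpa using hR hb0 hb0
  have hBd : ∀ p ∈ B, ∀ q ∈ B, ‖p - q‖ ≤ R := by
    intro p hp q hq; rw [← dist_eq_norm]; exact hR hp hq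
  -- word-indexed points
  set P : (ℕ → Bool) → ℕ → E2 := fun W n => wordCompNA ψ 1 n (fun i : Fin n => W i) b0
    with hPdef
  have hPB : ∀ W n, P W n ∈ B := fun W n => wordCompNA_mem ψ B hinv n 1 _ b0 hb0
  have hlip : ∀ (n k : ℕ) (w : Fin n → Bool) (p q : E2),
      ‖wordCompNA ψ k n w p - wordCompNA ψ k n w q‖
        ≤ (∏ i ∈ Finset.range n, c (k+i)) * ‖p - q‖ := wordCompNA_lip ψ c hc0 hc
  have hlipD : ∀ (n : ℕ) (w : Fin n → Bool) (p q : E2), p ∈ B → q ∈ B →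
      ‖wordCompNA ψ 1 n w p - wordCompNA ψ 1 n w q‖ ≤ (C*R) * r^n := by
    intro n w p q hp hq
    calc ‖wordCompNA ψ 1 n w p - wordCompNA ψ 1 n w q‖
        ≤ D n * ‖p - q‖ := by rw [hDdef]; exact hlip n 1 w p q
      _ ≤ (C * r^n) * R := by
          exact mul_le_mul (hD n) (hBd p hp q hq) (norm_nonneg _)
            (le_of_lt (by positivity))
      _ = (C*R) * r^n := by ring
  have hstep : ∀ W n, dist (P W n) (P W (n+1)) ≤ (C*R) * r^n := by
    intro W n
    have hsr := wordCompNA_succ_right ψ n 1 (fun i : Fin (n+1) => W i)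
    have hw : (fun i : Fin n => W ((i : Fin n).castSucc)) = (fun i : Fin n => W i) := by
      funext i; rfl
    have : P W (n+1) = wordCompNA ψ 1 n (fun i : Fin n => W i)
        (ψ (1+n) (W n) b0) := by
      rw [hPdef]
      simp only
      rw [hsr, hw]
      rfl
    rw [dist_eq_norm, this, hPdef]
    simp only
    have hq : ψ (1+n) (W n) b0 ∈ B := hinv (1+n) (W n) ⟨b0, hb0, rfl⟩
    exact hlipD n _ b0 _ hb0 hq
  choose x hx using fun W =>
    cauchySeq_tendsto_of_complete (cauchySeq_of_le_geometric r (C*R) hr1 (hstep W))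
  have htail : ∀ W n, dist (P W n) (x W) ≤ (C*R) * r^n / (1-r) := fun W n =>
    dist_le_of_le_geometric_of_tendsto r (C*R) hr1 (hstep W) (hx W) n
  -- the parameter map t
  set d : (ℕ → Bool) → ℕ → ℝ := fun W i => (if W i then (1-r) else 0) * r^i with hddef
  have hd0 : ∀ W i, 0 ≤ d W i := by
    intro W i
    rw [hddef]
    rcases Bool.dichotomy (W i) with h | h <;> simp [h] <;> positivity
  have hdle : ∀ W i, d W i ≤ (1-r) * r^i := by
    intro W i
    rw [hddef]
    rcases Bool.dichotomy (W i) with h | h <;> simp [h] <;> positivity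
  have hgeom : Summable (fun i : ℕ => (1-r) * r^i) :=
    (summable_geometric_of_lt_one hr0.le hr1).mul_left _
  have hsum : ∀ W, Summable (d W) := fun W =>
    Summable.of_nonneg_of_le (hd0 W) (hdle W) hgeom
  set t : (ℕ → Bool) → ℝ := fun W => ∑' i, d W i with htdef
  have ht0 : ∀ W, 0 ≤ t W := fun W => tsum_nonneg (hd0 W)
  have ht1 : ∀ W, t W ≤ 1 := by
    intro W
    have h1 : t W ≤ ∑' i, (1-r) * r^i := Summable.tsum_le_tsum (hdle W) (hsum W) hgeom
    have h2 : ∑' i : ℕ, (1-r) * r^i = 1 := by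
      rw [tsum_mul_left, tsum_geometric_of_lt_one hr0.le hr1]
      field_simp
    linarith
  -- words agreeing up to k have close x-points
  have hPagree : ∀ W W' (k : ℕ), (∀ i < k, W i = W' i) → P W k = P W' k := by
    intro W W' k h
    rw [hPdef]
    simp only
    have : (fun i : Fin k => W i) = (fun i : Fin k => W' i) := by
      funext i
      exact h i i.isLt
    rw [this]
  have hagree : ∀ W W' (k : ℕ), (∀ i < k, W i = W' i) →
      ‖x W - x W'‖ ≤ 2 * ((C*R) * r^k / (1-r)) := by
    intro W W' k h
    rw [← dist_eq_norm]
    calc dist (x W) (x W') ≤ dist (x W) (P W k) + dist (P W k) (x W') := dist_triangle _ _ _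
      _ = dist (P W k) (x W) + dist (P W' k) (x W') := by rw [dist_comm, hPagree W W' k h]
      _ ≤ (C*R) * r^k / (1-r) + (C*R) * r^k / (1-r) := add_le_add (htail W k) (htail W' k)
      _ = 2 * ((C*R) * r^k / (1-r)) := by ring
  -- separation of parameters
  have hsep : ∀ W W', W ≠ W' → ∃ k : ℕ, (∀ i < k, W i = W' i) ∧ W k ≠ W' k ∧
      (1-2*r) * r^k ≤ |t W - t W'| := by
    intro W W' hne
    have hex : ∃ i, W i ≠ W' i := by
      by_contra h
      push_neg at h
      exact hne (funext h)
    set k := Nat.find hex with hkdef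
    have hk : W k ≠ W' k := Nat.find_spec hex
    have hbelow : ∀ i < k, W i = W' i := fun i hi => not_not.1 (Nat.find_min hex hi)
    refine ⟨k, hbelow, hk, ?_⟩
    set e : ℕ → ℝ := fun i => d W i - d W' i with hedef
    have hesum : Summable e := (hsum W).sub (hsum W')
    have htt : t W - t W' = ∑' i, e i := by
      rw [htdef]
      exact (Summable.tsum_sub (hsum W) (hsum W')).symm
    have hsplit : ∑' i, e i = (∑ i ∈ Finset.range (k+1), e i) + ∑' i, e (i + (k+1)) :=
      (Summable.sum_add_tsum_nat_add (k+1) hesum).symm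
    have hhead : ∑ i ∈ Finset.range (k+1), e i = e k := by
      rw [Finset.sum_range_succ]
      have : ∑ i ∈ Finset.range k, e i = 0 := by
        apply Finset.sum_eq_zero
        intro i hi
        rw [hedef]
        simp only
        rw [hddef]
        simp only [hbelow i (Finset.mem_range.1 hi)]
        ring
      rw [this, zero_add]
    have hek : |e k| = (1-r) * r^k := by
      rw [hedef, hddef]
      simp only
      rcases Bool.dichotomy (W k) with h | h <;> rcases Bool.dichotomy (W' k) with h' | h'
      · exact absurd (h.trans h'.symm) hk
      · simp only [h, h', if_true, Bool.false_eq_true, if_false, zero_mul, zero_sub, abs_neg]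
        exact abs_of_nonneg (by positivity)
      · simp only [h, h', if_true, Bool.false_eq_true, if_false, zero_mul, sub_zero]
        exact abs_of_nonneg (by positivity)
      · exact absurd (h.trans h'.symm) hk
    have heabs : ∀ j, |e j| ≤ (1-r) * r^j := by
      intro j
      rw [hedef]
      simp only
      rw [abs_sub_le_iff]
      constructor
      · linarith [hd0 W' j, hdle W j]
      · linarith [hd0 W j, hdle W' j]
    have htail2 : |∑' i, e (i + (k+1))| ≤ r^(k+1) := by
      have hs1 : Summable (fun i => e (i + (k+1))) := (summable_nat_add_iff (k+1)).2 hesum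
      have hs2 : Summable (fun i : ℕ => (1-r) * r^(i + (k+1))) := by
        apply Summable.of_nonneg_of_le (fun i => by positivity)
          (fun i => ?_) hgeom
        have : r^(i + (k+1)) ≤ r^i := pow_le_pow_of_le_one hr0.le hr1.le (by omega)
        nlinarith
      calc |∑' i, e (i + (k+1))| ≤ ∑' i, |e (i + (k+1))| := by
            have := norm_tsum_le_tsum_norm (f := fun i => e (i + (k+1))) (by
              simpa only [Real.norm_eq_abs] using hs1.abs)
            simpa only [Real.norm_eq_abs] using this
        _ ≤ ∑' i, (1-r) * r^(i + (k+1)) := Summable.tsum_le_tsum (fun i => heabs _) hs1.abs hs2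
        _ = r^(k+1) := by
            have : ∀ i : ℕ, (1-r) * r^(i + (k+1)) = ((1-r) * r^(k+1)) * r^i := by
              intro i; rw [pow_add]; ring
            rw [tsum_congr this, tsum_mul_left, tsum_geometric_of_lt_one hr0.le hr1]
            field_simp
    have h5 : |e k| ≤ |t W - t W'| + |∑' i, e (i + (k+1))| := by
      have : e k = (t W - t W') - ∑' i, e (i + (k+1)) := by
        rw [htt, hsplit, hhead]; ring
      rw [this]
      exact abs_sub _ _
    have : (1-2*r) * r^k = (1-r) * r^k - r^(k+1) := by rw [pow_succ]; ring
    rw [this]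
    rw [hek] at h5
    linarith
  -- the Lipschitz constant on the Cantor set
  set L0 : ℝ := 2*(C*R) / ((1-r) * (1-2*r)) with hL0def
  clear_value L0
  have hCR0 : 0 ≤ C*R := mul_nonneg hC0.le hR0
  have hL00 : 0 ≤ L0 := by
    rw [hL0def]
    exact div_nonneg (by linarith) (mul_pos h1r h12r).le
  have hxlip : ∀ W W', ‖x W - x W'‖ ≤ L0 * |t W - t W'| := by
    intro W W'
    by_cases hWW : W = W'
    · simp [hWW]
    · obtain ⟨k, hbelow, _, hsepk⟩ := hsep W W' hWW
      have h1 : ‖x W - x W'‖ ≤ 2 * ((C*R) * r^k / (1-r)) := hagree W W' k hbelow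
      have h2 : 2 * ((C*R) * r^k / (1-r)) = L0 * ((1-2*r) * r^k) := by
        rw [hL0def]
        field_simp
      calc ‖x W - x W'‖ ≤ L0 * ((1-2*r) * r^k) := by rw [← h2]; exact h1
        _ ≤ L0 * |t W - t W'| := mul_le_mul_of_nonneg_left hsepk hL00
  have htinj : Function.Injective t := by
    intro W W' h
    by_contra hne
    obtain ⟨k, _, _, hsepk⟩ := hsep W W' hne
    rw [h, sub_self, abs_zero] at hsepk
    nlinarith [pow_pos hr0 k]
  -- coordinate functions and extension
  set T : Set ℝ := Set.range t with hTdef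
  set F : ℝ → Fin 2 → ℝ := fun s i => if h : ∃ W, t W = s then x h.choose i else 0 with hFdef
  have hFt : ∀ W i, F (t W) i = x W i := by
    intro W i
    have h : ∃ W', t W' = t W := ⟨W, rfl⟩
    rw [hFdef]
    simp only [dif_pos h]
    rw [htinj h.choose_spec]
  have hcoord : ∀ (v : E2) (i : Fin 2), |v i| ≤ ‖v‖ := by
    intro v i
    rw [EuclideanSpace.norm_eq]
    rw [show |v i| = Real.sqrt (‖v i‖^2) by rw [Real.sqrt_sq_eq_abs]; simp]
    apply Real.sqrt_le_sqrt
    exact Finset.single_le_sum (f := fun j => ‖v j‖^2) (fun j _ => by positivity)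
      (Finset.mem_univ i)
  have hFlip : ∀ i : Fin 2, LipschitzOnWith (Real.toNNReal L0) (fun s => F s i) T := by
    intro i
    rw [lipschitzOnWith_iff_dist_le_mul]
    rintro s ⟨W, rfl⟩ u ⟨W', rfl⟩
    rw [Real.dist_eq, Real.dist_eq, hFt W i, hFt W' i]
    calc |x W i - x W' i| = |(x W - x W') i| := by norm_num
      _ ≤ ‖x W - x W'‖ := hcoord _ i
      _ ≤ L0 * |t W - t W'| := hxlip W W'
      _ = (Real.toNNReal L0 : ℝ) * |t W - t W'| := by rw [Real.coe_toNNReal L0 hL00]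
  choose g hg hg' using fun i : Fin 2 => (hFlip i).extend_real
  set γ : ℝ → E2 := fun s => WithLp.toLp 2 (fun i => g i s) with hγdef
  have hγx : ∀ W, γ (t W) = x W := by
    intro W
    ext i
    show g i (t W) = x W i
    rw [← hg' i ⟨W, rfl⟩]
    exact hFt W i
  have hγlip : ∀ s u : ℝ, ‖γ s - γ u‖ ≤ (2*L0) * |s - u| := by
    intro s u
    have hco : ∀ i : Fin 2, ‖(γ s - γ u) i‖ ≤ L0 * |s - u| := by
      intro i
      have : (γ s - γ u) i = g i s - g i u := rfl
      rw [this, Real.norm_eq_abs, ← Real.dist_eq]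
      calc dist (g i s) (g i u) ≤ (Real.toNNReal L0 : ℝ) * dist s u := (hg i).dist_le_mul s u
        _ = L0 * |s - u| := by rw [Real.coe_toNNReal L0 hL00, Real.dist_eq]
    rw [EuclideanSpace.norm_eq]
    set z : ℝ := L0 * |s - u| with hzdef
    clear_value z
    have hz0 : 0 ≤ z := by rw [hzdef]; exact mul_nonneg hL00 (abs_nonneg _)
    calc Real.sqrt (∑ i : Fin 2, ‖(γ s - γ u) i‖^2)
        ≤ Real.sqrt (∑ _i : Fin 2, z^2) := by
          apply Real.sqrt_le_sqrt
          apply Finset.sum_le_sum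
          intro i _
          have := hco i
          nlinarith [norm_nonneg ((γ s - γ u) i)]
      _ = Real.sqrt (2 * z^2) := by
          rw [Finset.sum_const, Finset.card_univ, Fintype.card_fin, nsmul_eq_mul]
          norm_num
      _ ≤ 2 * z := by
          rw [show (2:ℝ) * z = Real.sqrt ((2*z)^2) by rw [Real.sqrt_sq (by linarith)]]
          apply Real.sqrt_le_sqrt
          nlinarith
      _ = (2*L0) * |s - u| := by rw [hzdef]; ring
  -- conclusion
  refine ⟨2*L0, γ, by linarith, fun s _ u _ => hγlip s u, ?_⟩
  intro a ha
  simp only [Set.mem_iInter, Set.mem_iUnion] at ha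
  have haw : ∀ n : ℕ, ∃ w : Fin (n+1) → Bool, ∃ p, p ∈ B ∧ wordCompNA ψ 1 (n+1) w p = a := by
    intro n
    obtain ⟨w, p, hp, he⟩ := ha (n+1) (by omega)
    exact ⟨w, p, hp, he⟩
  choose w p hpB hpa using haw
  set W : ℕ → ℕ → Bool := fun n i => if h : i < n+1 then w n ⟨i, h⟩ else false with hWdef
  have hWres : ∀ n, (fun i : Fin (n+1) => W n i) = w n := by
    intro n
    funext i
    rw [hWdef]
    simp only [i.isLt, dif_pos]
  have hPn : ∀ n, P (W n) (n+1) = wordCompNA ψ 1 (n+1) (w n) b0 := by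
    intro n
    rw [hPdef]
    simp only
    rw [hWres n]
  set M : ℝ := C*R + C*R/(1-r) with hMdef
  clear_value M
  have hdista : ∀ n, dist a (γ (t (W n))) ≤ M * r^(n+1) := by
    intro n
    rw [hγx (W n)]
    calc dist a (x (W n)) ≤ dist a (P (W n) (n+1)) + dist (P (W n) (n+1)) (x (W n)) :=
          dist_triangle _ _ _
      _ ≤ (C*R) * r^(n+1) + (C*R) * r^(n+1) / (1-r) := by
          apply add_le_add _ (htail (W n) (n+1))
          rw [hPn n, dist_eq_norm, ← hpa n]
          exact hlipD (n+1) (w n) (p n) b0 (hpB n) hb0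
      _ = M * r^(n+1) := by rw [hMdef]; ring
  have hγcont : Continuous γ := by
    have : LipschitzWith (Real.toNNReal (2*L0)) γ := by
      rw [lipschitzWith_iff_dist_le_mul]
      intro s u
      rw [dist_eq_norm, Real.coe_toNNReal _ (by linarith), Real.dist_eq]
      exact hγlip s u
    exact this.continuous
  have hcl : IsClosed (γ '' Set.Icc 0 1) := (isCompact_Icc.image hγcont).isClosed
  have htend : Filter.Tendsto (fun n => γ (t (W n))) Filter.atTop (nhds a) := by
    rw [tendsto_iff_dist_tendsto_zero]
    have h1 : Filter.Tendsto (fun n : ℕ => (M*r) * r^n) Filter.atTop (nhds ((M*r) * 0)) :=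
      (tendsto_pow_atTop_nhds_zero_of_lt_one hr0.le hr1).const_mul _
    rw [mul_zero] at h1
    have h2 : Filter.Tendsto (fun n : ℕ => M * r^(n+1)) Filter.atTop (nhds 0) :=
      h1.congr (fun n => by rw [pow_succ]; ring)
    exact squeeze_zero (fun n => dist_nonneg)
      (fun n => by rw [dist_comm]; exact hdista n) h2
  exact hcl.mem_of_tendsto htend (Filter.Eventually.of_forall (fun n =>
    ⟨t (W n), ⟨ht0 _, ht1 _⟩, rfl⟩))
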